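/- Let E*_n = {(a,b) in N^2 : 1 <= a+b <= n} with the componentwise order. For n >= 3, the number of n-element chains in E*_n that are mono-signed (all elements have signature a-b >= 0, or all elements have signature a-b <= 0) equals 2 * binomial(n, floor(n/2)). -/

import Mathlib

namespace MSChains


/-- `f n k` = number of nonnegative lattice paths of length `n` from `0` ending at height `k`. -/
def f : ℕ → ℕ → ℕ
  | 0, 0 => 1
  | 0, _+1 => 0
  | n+1, 0 => f n 1
  | n+1, k+1 => f n k + f n (k+2)

lemma choose_anti (n j : ℕ) (h : n ≤ 2*j) : n.choose (j+1) ≤ n.choose j := by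
  rcases lt_or_ge n (j+1) with h1 | h1
  · simp [Nat.choose_eq_zero_of_lt h1]
  · have e1 : n.choose (j+1) = n.choose (n - (j+1)) := (Nat.choose_symm h1).symm
    have e2 : n.choose j = n.choose (n - j) := (Nat.choose_symm (by omega)).symm
    rw [e1, e2]
    have h2 : n - (j+1) < n / 2 := by omega
    have := Nat.choose_le_succ_of_lt_half_left h2
    have e3 : n - (j+1) + 1 = n - j := by omega
    rwa [e3] at this

/-- closed form -/
def g (n k : ℕ) : ℕ :=
  if (n + k) % 2 = 0 then n.choose ((n+k)/2) - n.choose ((n+k)/2 + 1) else 0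

lemma f_eq_g : ∀ n k, f n k = g n k := by
  intro n
  induction n with
  | zero =>
    intro k
    match k with
    | 0 => simp [f, g]
    | k+1 =>
      simp only [f, g]
      split
      · rw [Nat.choose_eq_zero_of_lt (by omega)]; omega
      · rfl
  | succ n ih =>
    intro k
    match k with
    | 0 =>
      show f n 1 = g (n+1) 0
      rw [ih 1]
      unfold g
      have hpar : (n + 1) % 2 = (n + 1 + 0) % 2 := by omega
      rcases Nat.even_or_odd n with he | ho
      · obtain ⟨t, ht⟩ := he
        have h1 : (n + 1) % 2 ≠ 0 := by omega
        rw [if_neg (by omega), if_neg (by omega)]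
      · obtain ⟨t, ht⟩ := ho
        rw [if_pos (by omega), if_pos (by omega)]
        simp only [Nat.add_zero]
        have e1 : (n + 1)/2 = t+1 := by omega
        rw [e1]
        subst ht
        have p1 : (2*t+1+1).choose (t+1) = (2*t+1).choose t + (2*t+1).choose (t+1) :=
          Nat.choose_succ_succ _ _
        have p2 : (2*t+1+1).choose (t+1+1) = (2*t+1).choose (t+1) + (2*t+1).choose (t+1+1) :=
          Nat.choose_succ_succ _ _
        have p3 : (2*t+1).choose t = (2*t+1).choose (t+1) := by
          have := Nat.choose_symm (n := 2*t+1) (k := t+1) (by omega)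
          have e : 2*t+1 - (t+1) = t := by omega
          rw [e] at this
          omega
        have p4 : (2*t+1).choose (t+1+1) ≤ (2*t+1).choose (t+1) := choose_anti _ _ (by omega)
        omega
    | k+1 =>
      show f n k + f n (k+2) = g (n+1) (k+1)
      rw [ih k, ih (k+2)]
      unfold g
      by_cases hp : (n + k) % 2 = 0
      · rw [if_pos hp, if_pos (by omega), if_pos (by omega)]
        obtain ⟨u, hu⟩ : ∃ u, n + k = 2*u := ⟨(n+k)/2, by omega⟩
        have e1 : (n+k)/2 = u := by omega
        have e2 : (n+(k+2))/2 = u+1 := by omega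
        have e3 : (n+1+(k+1))/2 = u+1 := by omega
        rw [e1, e2, e3]
        have p1 : (n+1).choose (u+1) = n.choose u + n.choose (u+1) := Nat.choose_succ_succ _ _
        have p2 : (n+1).choose (u+1+1) = n.choose (u+1) + n.choose (u+1+1) := Nat.choose_succ_succ _ _
        have q1 : n.choose (u+1) ≤ n.choose u := choose_anti _ _ (by omega)
        have q2 : n.choose (u+1+1) ≤ n.choose (u+1) := choose_anti _ _ (by omega)
        omega
      · rw [if_neg hp, if_neg (by omega), if_neg (by omega)]

lemma f_zero_of_gt : ∀ n k, n < k → f n k = 0 := by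
  intro n
  induction n with
  | zero => intro k hk; match k, hk with | k+1, _ => rfl
  | succ n ih =>
    intro k hk
    match k, hk with
    | k+1, hk =>
      show f n k + f n (k+2) = 0
      rw [ih k (by omega), ih (k+2) (by omega)]

/-- total number of nonnegative paths of length n -/
def Sf (n : ℕ) : ℕ := ∑ k ∈ Finset.range (n+1), f n k

lemma Sf_rec (n : ℕ) : Sf (n+1) + f n 0 = 2 * Sf n := by
  have h1 : Sf (n+1) = ∑ k ∈ Finset.range (n+1), f (n+1) (k+1) + f (n+1) 0 :=
    Finset.sum_range_succ' _ _
  have h2 : ∑ k ∈ Finset.range (n+1), f (n+1) (k+1)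
      = ∑ k ∈ Finset.range (n+1), (f n k + f n (k+2)) := rfl
  rw [Finset.sum_add_distrib] at h2
  have h3 : (∑ k ∈ Finset.range (n+3), f n k)
      = ∑ k ∈ Finset.range (n+1), f n (k+2) + f n 1 + f n 0 := by
    rw [Finset.sum_range_succ' (fun k => f n k) (n+2)]
    congr 1
    exact Finset.sum_range_succ' (fun k => f n (k+1)) (n+1)
  have h4 : (∑ k ∈ Finset.range (n+3), f n k) = Sf n := by
    unfold Sf
    rw [Finset.sum_range_succ (fun k => f n k) (n+2), Finset.sum_range_succ (fun k => f n k) (n+1)]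
    rw [f_zero_of_gt n (n+1) (by omega), f_zero_of_gt n (n+2) (by omega)]
    omega
  have h5 : f (n+1) 0 = f n 1 := rfl
  have hS : Sf n = ∑ k ∈ Finset.range (n+1), f n k := rfl
  omega

lemma Sf_eq (n : ℕ) : Sf n = n.choose ((n+1)/2) := by
  induction n with
  | zero => simp [Sf, f]
  | succ n ih =>
    have hrec := Sf_rec n
    rw [f_eq_g] at hrec
    rcases Nat.even_or_odd n with ⟨t, ht⟩ | ⟨t, ht⟩
    · subst ht
      unfold g at hrec
      rw [if_pos (by omega)] at hrec
      have e1 : (t + t + 0)/2 = t := by omega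
      rw [e1] at hrec
      have e2 : (t + t + 1)/2 = t := by omega
      rw [e2] at ih
      have e3 : (t + t + 1 + 1)/2 = t + 1 := by omega
      rw [e3]
      have hn : t + t = 2 * t := by omega
      have p1 : (t+t+1).choose (t+1) = (t+t).choose t + (t+t).choose (t+1) :=
        Nat.choose_succ_succ _ _
      have q1 : (t+t).choose (t+1) ≤ (t+t).choose t := choose_anti _ _ (by omega)
      omega
    · subst ht
      unfold g at hrec
      rw [if_neg (by omega)] at hrec
      have e2 : (2*t+1+1)/2 = t+1 := by omega
      rw [e2] at ih
      have e3 : (2*t+1+1+1)/2 = t+1 := by omega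
      rw [e3]
      have p1 : (2*t+1+1).choose (t+1) = (2*t+1).choose t + (2*t+1).choose (t+1) :=
        Nat.choose_succ_succ _ _
      have p3 : (2*t+1).choose t = (2*t+1).choose (t+1) := by
        have := Nat.choose_symm (n := 2*t+1) (k := t+1) (by omega)
        have e : 2*t+1 - (t+1) = t := by omega
        rw [e] at this
        omega
      omega




/-- all lists of length n -/
def L : ℕ → Finset (List Bool)
  | 0 => {[]}
  | n+1 => ((L n).image (List.cons true)) ∪ ((L n).image (List.cons false))

lemma mem_L : ∀ (n : ℕ) (l : List Bool), l ∈ L n ↔ l.length = n := by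
  intro n
  induction n with
  | zero => intro l; cases l <;> simp [L]
  | succ n ih =>
    intro l
    cases l with
    | nil => simp [L]
    | cons b t =>
      simp only [L, Finset.mem_union, Finset.mem_image, List.length_cons]
      constructor
      · rintro (⟨s, hs, he⟩ | ⟨s, hs, he⟩) <;>
          · cases he; rw [(ih _).1 hs]
      · intro h
        cases b
        · exact Or.inr ⟨t, (ih t).2 (by omega), rfl⟩
        · exact Or.inl ⟨t, (ih t).2 (by omega), rfl⟩

def Pnn (l : List Bool) : Prop := ∀ t ∈ l.tails, t.count false ≤ t.count true

def Pnp (l : List Bool) : Prop := ∀ t ∈ l.tails, t.count true ≤ t.count false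

instance : DecidablePred Pnn := fun l =>
  inferInstanceAs (Decidable (∀ t ∈ l.tails, t.count false ≤ t.count true))

instance : DecidablePred Pnp := fun l =>
  inferInstanceAs (Decidable (∀ t ∈ l.tails, t.count true ≤ t.count false))

lemma pnn_iff {l : List Bool} : Pnn l ↔ ∀ t, t <:+ l → t.count false ≤ t.count true := by
  unfold Pnn; constructor
  · intro h t ht; exact h t ((List.mem_tails _ _).2 ht)
  · intro h t ht; exact h t ((List.mem_tails _ _).1 ht)

lemma pnp_iff {l : List Bool} : Pnp l ↔ ∀ t, t <:+ l → t.count true ≤ t.count false := by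
  unfold Pnp; constructor
  · intro h t ht; exact h t ((List.mem_tails _ _).2 ht)
  · intro h t ht; exact h t ((List.mem_tails _ _).1 ht)

lemma pnn_self {l : List Bool} (h : Pnn l) : l.count false ≤ l.count true :=
  pnn_iff.1 h l (List.suffix_refl l)

lemma pnn_cons {b : Bool} {t : List Bool} :
    Pnn (b :: t) ↔ Pnn t ∧ (b :: t).count false ≤ (b :: t).count true := by
  rw [pnn_iff, pnn_iff]
  constructor
  · intro h
    exact ⟨fun s hs => h s (hs.trans (t.suffix_cons b)), h _ (List.suffix_refl _)⟩
  · rintro ⟨h1, h2⟩ s hs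
    rcases List.suffix_cons_iff.1 hs with rfl | hs
    · exact h2
    · exact h1 s hs

lemma count_cons_t (b : Bool) (t : List Bool) :
    (b :: t).count true = t.count true + if b then 1 else 0 := by
  cases b <;> simp [List.count_cons]

lemma count_cons_f (b : Bool) (t : List Bool) :
    (b :: t).count false = t.count false + if b then 0 else 1 := by
  cases b <;> simp [List.count_cons]

/-- ballot lists of length n ending at height k -/
def Fk (n k : ℕ) : Finset (List Bool) :=
  (L n).filter (fun l => Pnn l ∧ l.count true = l.count false + k)


lemma mem_Fk {n k : ℕ} {l : List Bool} :
    l ∈ Fk n k ↔ l.length = n ∧ Pnn l ∧ l.count true = l.count false + k := by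
  simp [Fk, Finset.mem_filter, mem_L, and_assoc]

lemma Fk_succ_zero (n : ℕ) : Fk (n+1) 0 = (Fk n 1).image (List.cons false) := by
  ext l
  simp only [Finset.mem_image]
  constructor
  · intro h
    rw [mem_Fk] at h
    obtain ⟨hlen, hp, hc⟩ := h
    cases l with
    | nil => simp at hlen
    | cons b t =>
      rw [pnn_cons] at hp
      rw [count_cons_t, count_cons_f] at hc
      cases b
      · simp only [Bool.false_eq_true, if_false] at hc
        refine ⟨t, ?_, rfl⟩
        rw [mem_Fk]
        refine ⟨by simpa using hlen, hp.1, by omega⟩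
      · simp only [if_true] at hc
        exfalso
        have := pnn_self hp.1
        omega
  · rintro ⟨t, ht, rfl⟩
    rw [mem_Fk] at ht ⊢
    obtain ⟨hlen, hp, hc⟩ := ht
    refine ⟨by simp [hlen], ?_, ?_⟩
    · rw [pnn_cons]
      refine ⟨hp, ?_⟩
      rw [count_cons_t, count_cons_f]
      simp; omega
    · rw [count_cons_t, count_cons_f]; simp; omega

lemma Fk_succ_succ (n k : ℕ) :
    Fk (n+1) (k+1) = (Fk n k).image (List.cons true) ∪ (Fk n (k+2)).image (List.cons false) := by
  ext l
  simp only [Finset.mem_union, Finset.mem_image]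
  constructor
  · intro h
    rw [mem_Fk] at h
    obtain ⟨hlen, hp, hc⟩ := h
    cases l with
    | nil => simp at hlen
    | cons b t =>
      rw [pnn_cons] at hp
      rw [count_cons_t, count_cons_f] at hc
      cases b
      · simp only [Bool.false_eq_true, if_false] at hc
        refine Or.inr ⟨t, ?_, rfl⟩
        rw [mem_Fk]
        exact ⟨by simpa using hlen, hp.1, by omega⟩
      · simp only [if_true] at hc
        refine Or.inl ⟨t, ?_, rfl⟩
        rw [mem_Fk]
        exact ⟨by simpa using hlen, hp.1, by omega⟩
  · rintro (⟨t, ht, rfl⟩ | ⟨t, ht, rfl⟩) <;>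
    · rw [mem_Fk] at ht ⊢
      obtain ⟨hlen, hp, hc⟩ := ht
      have hs := pnn_self hp
      refine ⟨by simp [hlen], ?_, ?_⟩
      · rw [pnn_cons]
        refine ⟨hp, ?_⟩
        rw [count_cons_t, count_cons_f]
        simp; omega
      · rw [count_cons_t, count_cons_f]; simp; omega

lemma card_Fk : ∀ n k, (Fk n k).card = f n k := by
  intro n
  induction n with
  | zero =>
    intro k
    have h0 : Fk 0 k ⊆ {[]} := by
      intro l hl
      rw [mem_Fk] at hl
      simp [List.length_eq_zero_iff.1 hl.1]
    match k with
    | 0 =>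
      show _ = 1
      have : ([] : List Bool) ∈ Fk 0 0 := by rw [mem_Fk]; simp [Pnn]
      have h1 : Fk 0 0 = {[]} := Finset.Subset.antisymm h0 (by simpa using this)
      rw [h1]; rfl
    | k+1 =>
      show _ = 0
      rw [Finset.card_eq_zero]
      rw [Finset.eq_empty_iff_forall_notMem]
      intro l hl
      rw [mem_Fk] at hl
      have := List.length_eq_zero_iff.1 hl.1
      subst this
      simp at hl
  | succ n ih =>
    intro k
    have hinj_t : Function.Injective (List.cons true (α := Bool)) := fun a b h => by
      injection h
    have hinj_f : Function.Injective (List.cons false (α := Bool)) := fun a b h => by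
      injection h
    match k with
    | 0 =>
      rw [Fk_succ_zero, Finset.card_image_of_injective _ hinj_f, ih 1]
      rfl
    | k+1 =>
      rw [Fk_succ_succ]
      rw [Finset.card_union_of_disjoint]
      · rw [Finset.card_image_of_injective _ hinj_t, Finset.card_image_of_injective _ hinj_f,
          ih k, ih (k+2)]
        rfl
      · rw [Finset.disjoint_left]
        rintro l hl1 hl2
        simp only [Finset.mem_image] at hl1 hl2
        obtain ⟨t1, _, rfl⟩ := hl1
        obtain ⟨t2, _, he⟩ := hl2
        injection he with hb _
        exact Bool.noConfusion hb



lemma count_le_len (b : Bool) (l : List Bool) : l.count b ≤ l.length := List.count_le_length ..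

lemma Tnn_eq (n : ℕ) : (L n).filter Pnn = (Finset.range (n+1)).biUnion (fun k => Fk n k) := by
  ext l
  simp only [Finset.mem_filter, Finset.mem_biUnion, Finset.mem_range, mem_L]
  constructor
  · rintro ⟨hlen, hp⟩
    have h1 := pnn_self hp
    have h2 : l.count true ≤ n := hlen ▸ count_le_len true l
    refine ⟨l.count true - l.count false, by omega, ?_⟩
    rw [mem_Fk]
    exact ⟨hlen, hp, by omega⟩
  · rintro ⟨k, _, hk⟩
    rw [mem_Fk] at hk
    exact ⟨hk.1, hk.2.1⟩

lemma card_Tnn (n : ℕ) : ((L n).filter Pnn).card = Sf n := by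
  rw [Tnn_eq, Finset.card_biUnion, Sf]
  · exact Finset.sum_congr rfl (fun k _ => card_Fk n k)
  · intro i _ j _ hij
    simp only [Function.onFun]
    rw [Finset.disjoint_left]
    intro l hl1 hl2
    rw [mem_Fk] at hl1 hl2
    exact hij (by omega)

lemma count_map_not (b : Bool) (l : List Bool) : (l.map not).count b = l.count (!b) := by
  induction l with
  | nil => rfl
  | cons a t ih =>
    cases a <;> cases b <;> simp_all [List.count_cons]

lemma tails_map_not (l : List Bool) : (l.map not).tails = l.tails.map (List.map not) := by
  induction l with
  | nil => rfl
  | cons a t ih => simp [List.tails_cons, ih]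

lemma map_not_not (l : List Bool) : (l.map not).map not = l := by
  simp [List.map_map, Function.comp_def]

lemma pnp_iff_pnn (l : List Bool) : Pnp l ↔ Pnn (l.map not) := by
  unfold Pnp Pnn
  rw [tails_map_not]
  constructor
  · intro h t ht
    simp only [List.mem_map] at ht
    obtain ⟨s, hs, rfl⟩ := ht
    rw [count_map_not, count_map_not]
    exact h s hs
  · intro h t ht
    have : t.map not ∈ l.tails.map (List.map not) := List.mem_map_of_mem ht
    have := h _ this
    rwa [count_map_not, count_map_not] at this

lemma card_Tnp (n : ℕ) : ((L n).filter Pnp).card = Sf n := by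
  rw [← card_Tnn n]
  apply Finset.card_bij (fun l _ => l.map not)
  · intro l hl
    simp only [Finset.mem_filter, mem_L] at hl ⊢
    exact ⟨by simp [hl.1], (pnp_iff_pnn l).1 hl.2⟩
  · intro a ha b hb h
    have := congrArg (List.map not) h
    rwa [map_not_not, map_not_not] at this
  · intro b hb
    refine ⟨b.map not, ?_, map_not_not b⟩
    simp only [Finset.mem_filter, mem_L] at hb ⊢
    refine ⟨by simp [hb.1], ?_⟩
    rw [pnp_iff_pnn, map_not_not]
    exact hb.2

lemma exists_singleton_suffix : ∀ (l : List Bool), l ≠ [] → ∃ x, [x] <:+ l := by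
  intro l
  induction l with
  | nil => intro h; exact absurd rfl h
  | cons a t ih =>
    intro _
    cases t with
    | nil => exact ⟨a, List.suffix_refl _⟩
    | cons c s =>
      obtain ⟨x, hx⟩ := ih (by simp)
      exact ⟨x, hx.trans ((c :: s).suffix_cons a)⟩

lemma not_both {n : ℕ} (hn : 1 ≤ n) {l : List Bool} (hl : l ∈ L n) : ¬ (Pnn l ∧ Pnp l) := by
  rintro ⟨h1, h2⟩
  have hne : l ≠ [] := by
    intro h
    rw [mem_L] at hl
    subst h
    simp at hl
    omega
  obtain ⟨x, hx⟩ := exists_singleton_suffix l hne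
  have e1 := pnn_iff.1 h1 _ hx
  have e2 := pnp_iff.1 h2 _ hx
  cases x <;> simp [List.count_cons] at e1 e2

def GoodL (n : ℕ) : Finset (List Bool) := (L n).filter (fun l => Pnn l ∨ Pnp l)

lemma card_GoodL {n : ℕ} (hn : 1 ≤ n) : (GoodL n).card = 2 * Sf n := by
  unfold GoodL
  rw [Finset.filter_or]
  rw [Finset.card_union_of_disjoint]
  · rw [card_Tnn, card_Tnp]; ring
  · rw [Finset.disjoint_left]
    intro l hl1 hl2
    simp only [Finset.mem_filter] at hl1 hl2
    exact not_both hn hl1.1 ⟨hl1.2, hl2.2⟩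

def Phi : List Bool → Finset (ℕ × ℕ)
  | [] => ∅
  | b :: t => insert ((b::t).count true, (b::t).count false) (Phi t)

lemma count_add_len (l : List Bool) : l.count true + l.count false = l.length := by
  induction l with
  | nil => rfl
  | cons a t ih => cases a <;> simp [List.count_cons] <;> omega

lemma mem_Phi {p : ℕ × ℕ} : ∀ {l : List Bool},
    p ∈ Phi l ↔ ∃ t, t ≠ [] ∧ t <:+ l ∧ p = (t.count true, t.count false) := by
  intro l
  induction l with
  | nil =>
    simp only [Phi, Finset.notMem_empty, false_iff]
    rintro ⟨t, hne, hs, _⟩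
    exact hne (List.suffix_nil.1 hs)
  | cons b l ih =>
    simp only [Phi, Finset.mem_insert, ih]
    constructor
    · rintro (rfl | ⟨t, hne, hs, rfl⟩)
      · exact ⟨b :: l, by simp, List.suffix_refl _, rfl⟩
      · exact ⟨t, hne, hs.trans (l.suffix_cons b), rfl⟩
    · rintro ⟨t, hne, hs, rfl⟩
      rcases List.suffix_cons_iff.1 hs with rfl | hs
      · exact Or.inl rfl
      · exact Or.inr ⟨t, hne, hs, rfl⟩

lemma sum_mem_Phi {l : List Bool} {p : ℕ × ℕ} (h : p ∈ Phi l) :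
    1 ≤ p.1 + p.2 ∧ p.1 + p.2 ≤ l.length := by
  obtain ⟨t, hne, hs, rfl⟩ := mem_Phi.1 h
  have h1 : t.count true + t.count false = t.length := count_add_len t
  have h2 : t.length ≤ l.length := hs.length_le
  have h3 : 1 ≤ t.length := by
    cases t
    · exact absurd rfl hne
    · simp
  exact ⟨by simp; omega, by simp; omega⟩

lemma chain_Phi (l : List Bool) : IsChain (· ≤ ·) (↑(Phi l) : Set (ℕ × ℕ)) := by
  intro p hp q hq hne
  obtain ⟨t1, _, hs1, rfl⟩ := mem_Phi.1 hp
  obtain ⟨t2, _, hs2, rfl⟩ := mem_Phi.1 hq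
  rcases List.suffix_or_suffix_of_suffix hs1 hs2 with h | h
  · exact Or.inl ⟨h.sublist.count_le true, h.sublist.count_le false⟩
  · exact Or.inr ⟨h.sublist.count_le true, h.sublist.count_le false⟩

lemma top_not_mem {b : Bool} {t : List Bool} :
    ((b::t).count true, (b::t).count false) ∉ Phi t := by
  intro h
  have := (sum_mem_Phi h).2
  simp only at this
  have := count_add_len (b :: t)
  simp only [List.length_cons] at this
  omega

lemma card_Phi : ∀ (l : List Bool), (Phi l).card = l.length := by
  intro l
  induction l with
  | nil => rfl
  | cons b t ih =>
    show (insert _ (Phi t)).card = t.length + 1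
    rw [Finset.card_insert_of_notMem top_not_mem, ih]

lemma top_Phi {l : List Bool} {p : ℕ × ℕ} (h : p ∈ Phi l) (hsum : p.1 + p.2 = l.length) :
    p = (l.count true, l.count false) := by
  obtain ⟨t, hne, hs, rfl⟩ := mem_Phi.1 h
  have h1 : t.count true + t.count false = t.length := count_add_len t
  have h2 : t.length = l.length := by simp at hsum; omega
  rw [hs.sublist.eq_of_length h2]

lemma self_mem_Phi {l : List Bool} (h : l ≠ []) : (l.count true, l.count false) ∈ Phi l :=
  mem_Phi.2 ⟨l, h, List.suffix_refl l, rfl⟩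

lemma Phi_inj : ∀ (l₁ l₂ : List Bool), l₁.length = l₂.length → Phi l₁ = Phi l₂ → l₁ = l₂ := by
  intro l₁
  induction l₁ with
  | nil =>
    intro l₂ hlen _
    cases l₂
    · rfl
    · simp at hlen
  | cons b t ih =>
    intro l₂ hlen hPhi
    cases l₂ with
    | nil => simp at hlen
    | cons c s =>
      have hlen' : t.length = s.length := by simpa using hlen
      have htop : ((b::t).count true, (b::t).count false)
          = ((c::s).count true, (c::s).count false) := by
        apply top_Phi (hPhi ▸ self_mem_Phi (by simp))
        have := count_add_len (b :: t)
        simp only [List.length_cons] at this ⊢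
        omega
      have hPhi' : Phi t = Phi s := by
        have e1 : Phi t = (Phi (b :: t)).erase ((b::t).count true, (b::t).count false) := by
          show Phi t = (insert _ (Phi t)).erase _
          rw [Finset.erase_insert top_not_mem]
        have e2 : Phi s = (Phi (c :: s)).erase ((c::s).count true, (c::s).count false) := by
          show Phi s = (insert _ (Phi s)).erase _
          rw [Finset.erase_insert top_not_mem]
        rw [e1, e2, hPhi, htop]
      have hts : t = s := ih s hlen' hPhi'
      subst hts
      have hc : (b::t).count true = (c::t).count true := congrArg Prod.fst htop
      rw [count_cons_t, count_cons_t] at hc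
      cases b <;> cases c <;> simp_all

lemma nn_Phi (l : List Bool) : (∀ p ∈ Phi l, p.2 ≤ p.1) ↔ Pnn l := by
  rw [pnn_iff]
  constructor
  · intro h t ht
    cases t with
    | nil => simp
    | cons a s =>
      exact h _ (mem_Phi.2 ⟨a :: s, by simp, ht, rfl⟩)
  · intro h p hp
    obtain ⟨t, _, hs, rfl⟩ := mem_Phi.1 hp
    exact h t hs

lemma np_Phi (l : List Bool) : (∀ p ∈ Phi l, p.1 ≤ p.2) ↔ Pnp l := by
  rw [pnp_iff]
  constructor
  · intro h t ht
    cases t with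
    | nil => simp
    | cons a s =>
      exact h _ (mem_Phi.2 ⟨a :: s, by simp, ht, rfl⟩)
  · intro h p hp
    obtain ⟨t, _, hs, rfl⟩ := mem_Phi.1 hp
    exact h t hs

lemma sum_inj_on_chain {S : Finset (ℕ × ℕ)} (hc : IsChain (· ≤ ·) (↑S : Set (ℕ × ℕ)))
    {p q : ℕ × ℕ} (hp : p ∈ S) (hq : q ∈ S) (h : p.1 + p.2 = q.1 + q.2) : p = q := by
  by_cases hpq : p = q
  · exact hpq
  · rcases hc hp hq hpq with ⟨h1, h2⟩ | ⟨h1, h2⟩ <;>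
    · have : p.1 = q.1 ∧ p.2 = q.2 := by omega
      exact Prod.ext this.1 this.2

lemma exists_rep : ∀ (n : ℕ) (S : Finset (ℕ × ℕ)), S.card = n →
    (∀ p ∈ S, 1 ≤ p.1 + p.2 ∧ p.1 + p.2 ≤ n) → IsChain (· ≤ ·) (↑S : Set (ℕ × ℕ)) →
    ∃ l : List Bool, l.length = n ∧ S = Phi l := by
  intro n
  induction n with
  | zero =>
    intro S hcard _ _
    exact ⟨[], rfl, by rw [Finset.card_eq_zero.1 hcard]; rfl⟩
  | succ n ih =>
    intro S hcard hsum hchain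
    -- image of the sum map is Icc 1 (n+1)
    have hinj : Set.InjOn (fun p : ℕ × ℕ => p.1 + p.2) ↑S := by
      intro p hp q hq h
      exact sum_inj_on_chain hchain hp hq h
    have himage : S.image (fun p => p.1 + p.2) = Finset.Icc 1 (n+1) := by
      apply Finset.eq_of_subset_of_card_le
      · intro x hx
        simp only [Finset.mem_image] at hx
        obtain ⟨p, hp, rfl⟩ := hx
        simp only [Finset.mem_Icc]
        exact (hsum p hp)
      · rw [Finset.card_image_of_injOn hinj, hcard]
        simp
    have htopmem : ∃ q ∈ S, q.1 + q.2 = n + 1 := by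
      have : n + 1 ∈ S.image (fun p => p.1 + p.2) := by
        rw [himage]; simp
      simpa using this
    obtain ⟨q, hqS, hq⟩ := htopmem
    set S' := S.erase q with hS'
    have hcard' : S'.card = n := by
      rw [hS', Finset.card_erase_of_mem hqS, hcard]
      omega
    have hmem' : ∀ p ∈ S', p ∈ S ∧ p ≠ q := by
      intro p hp
      rw [hS', Finset.mem_erase] at hp
      exact ⟨hp.2, hp.1⟩
    have hsum' : ∀ p ∈ S', 1 ≤ p.1 + p.2 ∧ p.1 + p.2 ≤ n := by
      intro p hp
      obtain ⟨hpS, hpq⟩ := hmem' p hp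
      have h1 := hsum p hpS
      rcases Nat.lt_or_ge (p.1 + p.2) (n+1) with h | h
      · exact ⟨h1.1, by omega⟩
      · exfalso
        exact hpq (sum_inj_on_chain hchain hpS hqS (by omega))
    have hchain' : IsChain (· ≤ ·) (↑S' : Set (ℕ × ℕ)) := by
      apply IsChain.mono ?_ hchain
      intro p hp
      exact (hmem' p hp).1
    obtain ⟨l', hl'len, hl'⟩ := ih S' hcard' hsum' hchain'
    cases n with
    | zero =>
      -- S = {q}, q = (1,0) or (0,1)
      have hq10 : q = (1, 0) ∨ q = (0, 1) := by
        rcases q with ⟨a, b⟩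
        have hq' : a + b = 1 := hq
        rcases Nat.eq_zero_or_pos a with rfl | ha
        · right
          obtain rfl : b = 1 := by omega
          rfl
        · left
          obtain rfl : a = 1 := by omega
          obtain rfl : b = 0 := by omega
          rfl
      have hSq : S = {q} := by
        obtain ⟨a, ha⟩ := Finset.card_eq_one.1 hcard
        rw [ha] at hqS
        simp only [Finset.mem_singleton] at hqS
        rw [ha, hqS]
      rcases hq10 with rfl | rfl
      · exact ⟨[true], rfl, by rw [hSq]; rfl⟩
      · exact ⟨[false], rfl, by rw [hSq]; rfl⟩
    | succ m =>
      -- find q' of sum m+1 = n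
      have hq'mem : ∃ q' ∈ S, q'.1 + q'.2 = m + 1 := by
        have : m + 1 ∈ S.image (fun p => p.1 + p.2) := by
          rw [himage]; simp
        simpa using this
      obtain ⟨q', hq'S, hq'⟩ := hq'mem
      have hne : q' ≠ q := by
        intro h; rw [h] at hq'; omega
      have hq'S' : q' ∈ S' := by
        rw [hS', Finset.mem_erase]; exact ⟨hne, hq'S⟩
      have hl'ne : l' ≠ [] := by
        intro h; rw [h] at hl'len; simp at hl'len
      have hq'Phi : q' ∈ Phi l' := hl' ▸ hq'S'
      have hlen2 : q'.1 + q'.2 = l'.length := by omega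
      have hq'top : q' = (l'.count true, l'.count false) := top_Phi hq'Phi hlen2
      have hle : q' ≤ q := by
        rcases hchain hq'S hqS hne with h | h
        · exact h
        · exfalso
          obtain ⟨h1, h2⟩ := h
          omega
      obtain ⟨h1, h2⟩ := hle
      have hstep : (q.1 = q'.1 + 1 ∧ q.2 = q'.2) ∨ (q.1 = q'.1 ∧ q.2 = q'.2 + 1) := by omega
      rcases hstep with ⟨e1, e2⟩ | ⟨e1, e2⟩
      · refine ⟨true :: l', by simp [hl'len], ?_⟩
        show S = insert ((true :: l').count true, (true :: l').count false) (Phi l')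
        rw [count_cons_t, count_cons_f]
        simp only [if_true]
        have : (l'.count true + 1, l'.count false + 0) = q := by
          rw [Prod.ext_iff]
          have := congrArg Prod.fst hq'top
          have := congrArg Prod.snd hq'top
          simp_all
        rw [this, ← hl', hS', Finset.insert_erase hqS]
      · refine ⟨false :: l', by simp [hl'len], ?_⟩
        show S = insert ((false :: l').count true, (false :: l').count false) (Phi l')
        rw [count_cons_t, count_cons_f]
        simp only [Bool.false_eq_true, if_false]
        have : (l'.count true + 0, l'.count false + 1) = q := by
          rw [Prod.ext_iff]
          have := congrArg Prod.fst hq'top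
          have := congrArg Prod.snd hq'top
          simp_all
        rw [this, ← hl', hS', Finset.insert_erase hqS]

end MSChains

open MSChains in
/-- For `n ≥ 3`, the number of mono-signed `n`-chains in `E*_n` (all elements of
nonnegative signature, or all of nonpositive signature) is `2 * n.choose (n / 2)`. -/
theorem count_monosigned_chains (n : ℕ) (hn : 3 ≤ n) :
    Nat.card {S : Finset (ℕ × ℕ) // S.card = n ∧
      (∀ p ∈ S, 1 ≤ p.1 + p.2 ∧ p.1 + p.2 ≤ n) ∧
      IsChain (· ≤ ·) (S : Set (ℕ × ℕ)) ∧
      ((∀ p ∈ S, p.2 ≤ p.1) ∨ (∀ p ∈ S, p.1 ≤ p.2))} = 2 * n.choose (n / 2) := by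
  have hiff : ∀ S : Finset (ℕ × ℕ),
      (S.card = n ∧ (∀ p ∈ S, 1 ≤ p.1 + p.2 ∧ p.1 + p.2 ≤ n) ∧
        IsChain (· ≤ ·) (S : Set (ℕ × ℕ)) ∧
        ((∀ p ∈ S, p.2 ≤ p.1) ∨ (∀ p ∈ S, p.1 ≤ p.2)))
      ↔ S ∈ (GoodL n).image Phi := by
    intro S
    constructor
    · rintro ⟨h1, h2, h3, h4⟩
      obtain ⟨l, hlen, rfl⟩ := exists_rep n S h1 h2 h3
      refine Finset.mem_image.2 ⟨l, ?_, rfl⟩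
      simp only [GoodL, Finset.mem_filter, mem_L]
      refine ⟨hlen, ?_⟩
      rcases h4 with h4 | h4
      · exact Or.inl ((nn_Phi l).1 h4)
      · exact Or.inr ((np_Phi l).1 h4)
    · intro h
      obtain ⟨l, hl, rfl⟩ := Finset.mem_image.1 h
      simp only [GoodL, Finset.mem_filter, mem_L] at hl
      obtain ⟨hlen, hl2⟩ := hl
      refine ⟨by rw [card_Phi, hlen], ?_, chain_Phi l, ?_⟩
      · intro p hp
        have := sum_mem_Phi hp
        rw [hlen] at this
        exact this
      · rcases hl2 with h' | h'
        · exact Or.inl ((nn_Phi l).2 h')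
        · exact Or.inr ((np_Phi l).2 h')
  calc Nat.card {S : Finset (ℕ × ℕ) // S.card = n ∧
      (∀ p ∈ S, 1 ≤ p.1 + p.2 ∧ p.1 + p.2 ≤ n) ∧
      IsChain (· ≤ ·) (S : Set (ℕ × ℕ)) ∧
      ((∀ p ∈ S, p.2 ≤ p.1) ∨ (∀ p ∈ S, p.1 ≤ p.2))}
      = Nat.card {S : Finset (ℕ × ℕ) // S ∈ (GoodL n).image Phi} :=
        Nat.card_congr (Equiv.subtypeEquivRight hiff)
    _ = ((GoodL n).image Phi).card := Nat.card_eq_finsetCard _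
    _ = (GoodL n).card := by
        apply Finset.card_image_of_injOn
        intro l1 h1 l2 h2 h
        have e1 : l1.length = n := (mem_L n l1).1 (Finset.mem_of_mem_filter _ h1)
        have e2 : l2.length = n := (mem_L n l2).1 (Finset.mem_of_mem_filter _ h2)
        exact Phi_inj l1 l2 (by rw [e1, e2]) h
    _ = 2 * Sf n := card_GoodL (by omega)
    _ = 2 * n.choose (n / 2) := by
        rw [Sf_eq]
        congr 1
        have h1 : (n+1)/2 ≤ n := by omega
        have := Nat.choose_symm h1
        have e : n - (n+1)/2 = n/2 := by omega
        rw [e] at this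
        exact this.symm
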